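/- Let λ₁, λ₂ ∈ ℂ∖{0} and b₁, b₂ ∈ ℂ∖{0, 1/2}. There exists a ℂ-linear bijection ψ : Q × Q → Q × Q that is grading-homogeneous (i.e., either ψ(Q×{0}) = Q×{0} and ψ({0}×Q) = {0}×Q, or ψ(Q×{0}) = {0}×Q and ψ({0}×Q) = Q×{0}) and satisfies ψ ∘ L_m^{(λ₁,b₁)} = L_m^{(λ₂,b₂)} ∘ ψ and ψ ∘ G_m^{(λ₁,b₁)} = G_m^{(λ₂,b₂)} ∘ ψ for all m ∈ ℤ, if and only if λ₁ = λ₂ and b₁ = b₂. (Here superscripts indicate the operators of Ω_ℛ(λ₁,b₁) and Ω_ℛ(λ₂,b₂).) -/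

import Mathlib

/- STATEMENT 14: For λ₁, λ₂ ≠ 0 and b₁, b₂ ∉ {0, 1/2}, there is a grading-homogeneous
ℂ-linear bijection ψ of Q × Q intertwining the operators of Ω_ℛ(λ₁,b₁) with those of
Ω_ℛ(λ₂,b₂) if and only if λ₁ = λ₂ and b₁ = b₂. -/

open Polynomial

noncomputable section

abbrev Qp := Polynomial ℂ

/-- `L_m(p,q) = (λ^m(x+m(b−1))·p(x−m), λ^m(x+m(b−1/2))·q(x−m))` -/
def OL (lam b : ℂ) (m : ℤ) : Qp × Qp → Qp × Qp :=
  fun w => (lam ^ m • ((X + C ((m : ℂ) * (b - 1))) * w.1.comp (X - C (m : ℂ))),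
            lam ^ m • ((X + C ((m : ℂ) * (b - 1 / 2))) * w.2.comp (X - C (m : ℂ))))

/-- `G_m(p,q) = (−λ^m·q(x−m), λ^m(x+m(2b−1))·p(x−m))` -/
def OG (lam b : ℂ) (m : ℤ) : Qp × Qp → Qp × Qp :=
  fun w => (-(lam ^ m • w.2.comp (X - C (m : ℂ))),
            lam ^ m • ((X + C ((m : ℂ) * (2 * b - 1))) * w.1.comp (X - C (m : ℂ))))

theorem stmt14 (lam₁ lam₂ : ℂ) (h₁ : lam₁ ≠ 0) (h₂ : lam₂ ≠ 0)
    (b₁ b₂ : ℂ) (hb₁ : b₁ ≠ 0 ∧ b₁ ≠ 1 / 2) (hb₂ : b₂ ≠ 0 ∧ b₂ ≠ 1 / 2) :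
    (∃ ψ : (Qp × Qp) ≃ₗ[ℂ] (Qp × Qp),
        ((⇑ψ '' {w : Qp × Qp | w.2 = 0} = {w : Qp × Qp | w.2 = 0} ∧
          ⇑ψ '' {w : Qp × Qp | w.1 = 0} = {w : Qp × Qp | w.1 = 0}) ∨
         (⇑ψ '' {w : Qp × Qp | w.2 = 0} = {w : Qp × Qp | w.1 = 0} ∧
          ⇑ψ '' {w : Qp × Qp | w.1 = 0} = {w : Qp × Qp | w.2 = 0})) ∧
        (∀ m : ℤ, ∀ w : Qp × Qp, ψ (OL lam₁ b₁ m w) = OL lam₂ b₂ m (ψ w)) ∧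
        (∀ m : ℤ, ∀ w : Qp × Qp, ψ (OG lam₁ b₁ m w) = OG lam₂ b₂ m (ψ w))) ↔
      (lam₁ = lam₂ ∧ b₁ = b₂) := by
  constructor
  · rintro ⟨ψ, hgrad, hL, hG⟩
    have hX : ∀ f g : Qp, ψ (X * f, X * g) = (X * (ψ (f, g)).1, X * (ψ (f, g)).2) := by
      intro f g
      simpa [OL] using hL 0 (f, g)
    have hmul : ∀ (p f g : Qp),
        ψ (p * f, p * g) = (p * (ψ (f, g)).1, p * (ψ (f, g)).2) := by
      intro p
      induction p using Polynomial.induction_on with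
      | C a =>
        intro f g
        have h : ((C a * f, C a * g) : Qp × Qp) = a • (f, g) := by
          simp [Prod.smul_mk, smul_eq_C_mul]
        rw [h, map_smul]
        simp [Prod.smul_def, smul_eq_C_mul]
      | add p q hp hq =>
        intro f g
        have h : (((p + q) * f, (p + q) * g) : Qp × Qp) = (p * f, p * g) + (q * f, q * g) := by
          simp [add_mul, Prod.mk_add_mk]
        rw [h, map_add, hp, hq]
        simp [Prod.mk_add_mk]; constructor <;> ring
      | monomial n a hIH =>
        intro f g
        have e1 : C a * X ^ (n + 1) * f = X * (C a * X ^ n * f) := by ring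
        have e2 : C a * X ^ (n + 1) * g = X * (C a * X ^ n * g) := by ring
        rw [e1, e2, hX (C a * X ^ n * f) (C a * X ^ n * g), hIH f g]
        simp [Prod.ext_iff]; constructor <;> ring
    have hψ0 : ∀ p q : Qp, ψ (p, q) = (p * (ψ (1, 0)).1 + q * (ψ (0, 1)).1,
                              p * (ψ (1, 0)).2 + q * (ψ (0, 1)).2) := by
      intro p q
      have h1 := hmul p 1 0
      have h2 := hmul q 0 1
      simp only [mul_one, mul_zero] at h1 h2
      have h : ((p, q) : Qp × Qp) = (p, 0) + (0, q) := by simp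
      rw [h, map_add, h1, h2]
      simp [Prod.mk_add_mk]
    obtain ⟨A, B, hAB⟩ : ∃ A B : Qp, ψ (1, 0) = (A, B) := ⟨_, _, rfl⟩
    obtain ⟨Cc, D, hCD⟩ : ∃ Cc D : Qp, ψ (0, 1) = (Cc, D) := ⟨_, _, rfl⟩
    have hψ : ∀ p q : Qp, ψ (p, q) = (p * A + q * Cc, p * B + q * D) := by
      intro p q
      rw [hψ0 p q, hAB, hCD]
    rcases hgrad with ⟨hg1, hg2⟩ | ⟨hg1, hg2⟩
    · -- diagonal case
      have hB0 : B = 0 := by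
        have hmem : ψ (1, 0) ∈ {w : Qp × Qp | w.2 = 0} := by
          rw [← hg1]
          exact Set.mem_image_of_mem ψ rfl
        rw [hAB] at hmem
        exact hmem
      have hAunit : IsUnit A := by
        have hmem : ((1 : Qp), (0 : Qp)) ∈ ⇑ψ '' {w : Qp × Qp | w.2 = 0} := by
          rw [hg1]; exact rfl
        obtain ⟨⟨u, v⟩, hv, huv⟩ := hmem
        have hv' : v = 0 := hv
        subst hv'
        rw [hψ u 0] at huv
        have hu : u * A = 1 := by
          have h' := congrArg Prod.fst huv
          simpa using h'
        exact IsUnit.of_mul_eq_one (a := A) u (by rw [mul_comm]; exact hu)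
      obtain ⟨r, hr, hCr⟩ := Polynomial.isUnit_iff.mp hAunit
      have hrne : r ≠ 0 := hr.ne_zero
      have hψ10 : ψ ((1 : Qp), (0 : Qp)) = (C r, 0) := by
        rw [hAB, hCr, hB0]
      have hO1 : OL lam₁ b₁ 1 ((1 : Qp), 0) = (lam₁ • ((X + C (b₁ - 1)) : Qp), 0) := by
        simp only [OL, zpow_one, Int.cast_one, one_mul, Polynomial.one_comp,
          Polynomial.zero_comp, mul_one, mul_zero, smul_zero]
      have hO2 : OL lam₂ b₂ 1 ((C r : Qp), 0) = (lam₂ • ((X + C (b₂ - 1)) * C r), 0) := by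
        simp only [OL, zpow_one, Int.cast_one, one_mul, Polynomial.C_comp,
          Polynomial.zero_comp, mul_zero, smul_zero]
      have hk := hL 1 ((1 : Qp), (0 : Qp))
      rw [hO1, hψ10, hO2, hψ _ 0] at hk
      rw [Prod.mk.injEq] at hk
      have hE : lam₁ • ((X + C (b₁ - 1) : Qp) * C r) = lam₂ • ((X + C (b₂ - 1)) * C r) := by
        have h' := hk.1
        rw [← hCr, zero_mul, add_zero, smul_mul_assoc] at h'
        exact h'
      have hco : ∀ l c : ℂ, (l • ((X + C c) * C r) : Qp).coeff 1 = l * r ∧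
          (l • ((X + C c) * C r) : Qp).coeff 0 = l * (c * r) := by
        intro l c
        constructor
        · rw [coeff_smul, coeff_mul_C]
          simp [smul_eq_mul]
        · rw [coeff_smul, coeff_mul_C]
          simp [smul_eq_mul]
      have hc1 : lam₁ * r = lam₂ * r := by
        have h' : (lam₁ • ((X + C (b₁ - 1)) * C r) : Qp).coeff 1 =
            (lam₂ • ((X + C (b₂ - 1)) * C r) : Qp).coeff 1 := by rw [hE]
        rwa [(hco lam₁ (b₁ - 1)).1, (hco lam₂ (b₂ - 1)).1] at h'
      have hc0 : lam₁ * ((b₁ - 1) * r) = lam₂ * ((b₂ - 1) * r) := by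
        have h' : (lam₁ • ((X + C (b₁ - 1)) * C r) : Qp).coeff 0 =
            (lam₂ • ((X + C (b₂ - 1)) * C r) : Qp).coeff 0 := by rw [hE]
        rwa [(hco lam₁ (b₁ - 1)).2, (hco lam₂ (b₂ - 1)).2] at h'
      have hlam : lam₁ = lam₂ := mul_right_cancel₀ hrne hc1
      refine ⟨hlam, ?_⟩
      rw [hlam] at hc0
      have h3 : (b₁ - 1) * r = (b₂ - 1) * r := mul_left_cancel₀ h₂ hc0
      have h4 : b₁ - 1 = b₂ - 1 := mul_right_cancel₀ hrne h3
      linear_combination h4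
    · -- antidiagonal case: impossible
      exfalso
      have hBunit : IsUnit B := by
        have hmem : ((0 : Qp), (1 : Qp)) ∈ ⇑ψ '' {w : Qp × Qp | w.2 = 0} := by
          rw [hg1]; exact rfl
        obtain ⟨⟨u, v⟩, hv, huv⟩ := hmem
        have hv' : v = 0 := hv
        subst hv'
        rw [hψ u 0] at huv
        have hu : u * B = 1 := by
          have h' := congrArg Prod.snd huv
          simpa using h'
        exact IsUnit.of_mul_eq_one (a := B) u (by rw [mul_comm]; exact hu)
      have hCunit : IsUnit Cc := by
        have hmem : ((1 : Qp), (0 : Qp)) ∈ ⇑ψ '' {w : Qp × Qp | w.1 = 0} := by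
          rw [hg2]; exact rfl
        obtain ⟨⟨u, v⟩, hv, huv⟩ := hmem
        have hv' : u = 0 := hv
        subst hv'
        rw [hψ 0 v] at huv
        have hu : v * Cc = 1 := by
          have h' := congrArg Prod.fst huv
          simpa using h'
        exact IsUnit.of_mul_eq_one (a := Cc) v (by rw [mul_comm]; exact hu)
      have hA0 : A = 0 := by
        have hmem : ψ (1, 0) ∈ {w : Qp × Qp | w.1 = 0} := by
          rw [← hg1]
          exact Set.mem_image_of_mem ψ rfl
        rw [hAB] at hmem
        exact hmem
      obtain ⟨s, hs, hCs⟩ := Polynomial.isUnit_iff.mp hCunit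
      obtain ⟨t, ht, hCt⟩ := Polynomial.isUnit_iff.mp hBunit
      have hψ10 : ψ ((1 : Qp), (0 : Qp)) = (0, C t) := by
        rw [hAB, hA0, hCt]
      have hO3 : OG lam₁ b₁ 0 ((1 : Qp), 0) = (0, X) := by
        simp only [OG, zpow_zero, Int.cast_zero, zero_mul, map_zero, sub_zero, add_zero,
          Polynomial.zero_comp, Polynomial.one_comp, smul_zero, neg_zero, one_smul, mul_one,
          Polynomial.comp_X]
      have hO4 : OG lam₂ b₂ 0 ((0 : Qp), C t) = (-(C t : Qp), 0) := by
        simp only [OG, zpow_zero, Int.cast_zero, zero_mul, map_zero, sub_zero, add_zero,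
          Polynomial.zero_comp, Polynomial.C_comp, smul_zero, one_smul, mul_zero,
          Polynomial.comp_X]
      have hk := hG 0 ((1 : Qp), (0 : Qp))
      rw [hO3, hψ10, hO4, hψ 0 X] at hk
      rw [Prod.mk.injEq] at hk
      have hE : X * C s = -(C t : Qp) := by
        have h' := hk.1
        rw [← hCs, zero_mul, zero_add] at h'
        exact h'
      have h1 : (X * C s : Qp).coeff 1 = s := by
        rw [coeff_mul_C, coeff_X_one, one_mul]
      have h2 : (-(C t : Qp)).coeff 1 = 0 := by
        rw [coeff_neg, coeff_C]
        norm_num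
      rw [hE, h2] at h1
      exact hs.ne_zero h1.symm
  · rintro ⟨rfl, rfl⟩
    refine ⟨LinearEquiv.refl ℂ (Qp × Qp), ?_, ?_, ?_⟩
    · left; constructor <;> exact Set.image_id _
    · intro m w; simp
    · intro m w; simp

end
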